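/- The formal power series expansion of t·((1+t)^d + (1-t)^d)/((1+t)^d − (1-t)^d) has t⁴-coefficient equal to −(d²−1)(d²−4)/(45d). -/

import Mathlib

open PowerSeries

lemma coeff_one_add_X_pow (d n : ℕ) :
    coeff n ((1 + X : ℚ⟦X⟧) ^ d) = d.choose n := by
  rw [add_comm, add_pow, map_sum]
  have : ∀ x ∈ Finset.range (d+1), coeff n ((X:ℚ⟦X⟧) ^ x * 1 ^ (d - x) * (d.choose x : ℚ⟦X⟧))
      = if x = n then (d.choose n : ℚ) else 0 := by
    intro x _
    rw [one_pow, mul_one, mul_comm, ← map_natCast (C (R := ℚ)), coeff_C_mul_X_pow]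
    split_ifs with h1 h2 h3
    · subst h2; rfl
    · exact absurd h1.symm h2
    · exact absurd h3.symm h1
    · rfl
  rw [Finset.sum_congr rfl this, Finset.sum_ite_eq' (Finset.range (d+1)) n]
  split_ifs with h
  · rfl
  · rw [Nat.choose_eq_zero_of_lt (by simp at h; omega)]; simp

lemma coeff_one_sub_X_pow (d n : ℕ) :
    coeff n ((1 - X : ℚ⟦X⟧) ^ d) = (-1)^n * d.choose n := by
  rw [sub_eq_add_neg, add_comm, add_pow, map_sum]
  have : ∀ x ∈ Finset.range (d+1), coeff n ((-X:ℚ⟦X⟧) ^ x * 1 ^ (d - x) * (d.choose x : ℚ⟦X⟧))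
      = if x = n then ((-1)^n * d.choose n : ℚ) else 0 := by
    intro x _
    have hx : ((-X:ℚ⟦X⟧) ^ x * 1 ^ (d - x) * (d.choose x : ℚ⟦X⟧))
        = (C (R := ℚ)) ((-1)^x * d.choose x) * X ^ x := by
      rw [one_pow, mul_one, neg_pow, map_mul, map_pow, map_neg, map_one, map_natCast]
      ring
    rw [hx, coeff_C_mul_X_pow]
    split_ifs with h1 h2 h3
    · subst h2; rfl
    · exact absurd h1.symm h2
    · exact absurd h3.symm h1
    · rfl
  rw [Finset.sum_congr rfl this, Finset.sum_ite_eq' (Finset.range (d+1)) n]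
  split_ifs with h
  · rfl
  · rw [Nat.choose_eq_zero_of_lt (by simp at h; omega)]; simp

lemma ch2 (d : ℕ) : ((d.choose 2 : ℕ):ℚ) = d*(d-1)/2 := by
  induction d with
  | zero => simp
  | succ n ih => rw [Nat.choose_succ_succ]; push_cast [Nat.choose_one_right, ih]; ring

lemma ch3 (d : ℕ) : ((d.choose 3 : ℕ):ℚ) = d*(d-1)*(d-2)/6 := by
  induction d with
  | zero => simp
  | succ n ih => rw [Nat.choose_succ_succ]; push_cast [Nat.choose_one_right, ih, ch2]; ring

lemma ch4 (d : ℕ) : ((d.choose 4 : ℕ):ℚ) = d*(d-1)*(d-2)*(d-3)/24 := by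
  induction d with
  | zero => simp
  | succ n ih => rw [Nat.choose_succ_succ]; push_cast [Nat.choose_one_right, ih, ch3]; ring

lemma ch5 (d : ℕ) : ((d.choose 5 : ℕ):ℚ) = d*(d-1)*(d-2)*(d-3)*(d-4)/120 := by
  induction d with
  | zero => simp
  | succ n ih => rw [Nat.choose_succ_succ]; push_cast [Nat.choose_one_right, ih, ch4]; ring

/-- The `t⁴`-coefficient of `sign(t) = t·((1+t)^d + (1-t)^d)/((1+t)^d - (1-t)^d)`
equals `-(d²-1)(d²-4)/(45d)`. -/
theorem stmt_1 (d : ℕ) (hd : 1 ≤ d) (F : PowerSeries ℚ)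
    (hF : F * ((1 + X) ^ d - (1 - X) ^ d) = X * ((1 + X) ^ d + (1 - X) ^ d)) :
    coeff 4 F = -(((d : ℚ) ^ 2 - 1) * ((d : ℚ) ^ 2 - 4)) / (45 * d) := by
  have hd0 : (d:ℚ) ≠ 0 := Nat.cast_ne_zero.mpr (by omega)
  have h1 := congrArg (coeff 1) hF
  have h3 := congrArg (coeff 3) hF
  have h5 := congrArg (coeff 5) hF
  rw [show (1:ℕ) = 0 + 1 from rfl, coeff_succ_X_mul, coeff_mul,
    Finset.Nat.sum_antidiagonal_eq_sum_range_succ_mk] at h1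
  rw [show (3:ℕ) = 2 + 1 from rfl, coeff_succ_X_mul, coeff_mul,
    Finset.Nat.sum_antidiagonal_eq_sum_range_succ_mk] at h3
  rw [show (5:ℕ) = 4 + 1 from rfl, coeff_succ_X_mul, coeff_mul,
    Finset.Nat.sum_antidiagonal_eq_sum_range_succ_mk] at h5
  simp only [Finset.sum_range_succ, Finset.sum_range_zero, map_sub, map_add,
    coeff_one_add_X_pow, coeff_one_sub_X_pow] at h1 h3 h5
  norm_num [Nat.choose_one_right] at h1 h3 h5
  rw [ch2, ch3] at h3
  rw [ch3, ch4, ch5] at h5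
  have hb : coeff 2 F * (3*(d:ℚ)) = (d:ℚ)^2 - 1 := by
    linear_combination (-((d:ℚ)-1)*((d:ℚ)-2)/4)*h1 + (3/2)*h3
  have hc : 45*(d:ℚ)*(coeff 4 F) = -(((d : ℚ) ^ 2 - 1) * ((d : ℚ) ^ 2 - 4)) := by
    linear_combination (-(3:ℚ)/16*((d:ℚ)-1)*((d:ℚ)-2)*((d:ℚ)-3)*((d:ℚ)-4))*h1
      + (-(5:ℚ)/2*((d:ℚ)-1)*((d:ℚ)-2))*hb + (45/2)*h5
  field_simp
  linear_combination hc
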